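/- arXiv:1801.02868 — 15 statements merged into one kernel-verified Lean document; each statement's English description precedes it below -/
import Mathlib

section
/- Let L be an n×N matrix over F_q and let I be the set of all vectors z in F_q^n such that for some i in [m], 1 ≤ wt(z_{X_i}) ≤ 2δ. Then L is a valid encoder matrix for the BNSI problem (i.e., every receiver u_i can recover x_{X_i} from xL together with any side information x_{X_i} + ε_i with wt(ε_i) ≤ δ) if and only if zL ≠ 0 for every z ∈ I. -/
open Matrix

/-- Hamming weight of `z` restricted to the coordinates in `S`. -/
def wtOn {ι F : Type*} [Zero F] [DecidableEq F] (S : Finset ι) (z : ι → F) : ℕ :=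
  (S.filter fun j => z j ≠ 0).card

/-- Hamming weight of a vector. -/
def wt {ι F : Type*} [Fintype ι] [Zero F] [DecidableEq F] (z : ι → F) : ℕ :=
  (Finset.univ.filter fun j => z j ≠ 0).card

/-- `L` is a valid encoder matrix for the BNSI problem with demand sets `X` and error
bound `δ` iff `z ⬝ᵥ L ≠ 0` for every `z` with `1 ≤ wt(z_{X i}) ≤ 2δ` for some receiver `i`. -/
def ValidEncoder {κ ι F : Type*} [Fintype ι] [Field F] [DecidableEq F] {N : ℕ}
    (X : κ → Finset ι) (δ : ℕ) (L : Matrix ι (Fin N) F) : Prop :=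
  ∀ z : ι → F, (∃ i, 1 ≤ wtOn (X i) z ∧ wtOn (X i) z ≤ 2 * δ) → Matrix.vecMul z L ≠ 0

/-- Optimal codelength of a linear coding scheme for the BNSI problem over `F`. -/
noncomputable def Nopt (F : Type*) [Field F] [DecidableEq F] {κ ι : Type*} [Fintype ι]
    (X : κ → Finset ι) (δ : ℕ) : ℕ :=
  sInf {N : ℕ | ∃ L : Matrix ι (Fin N) F, ValidEncoder X δ L}

/-- `Φ(B)`: the collection of non-empty `C ⊆ [n]` such that every demand set meets `C`
in either `0` or at least `2δ+1` elements. -/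
def Phi {m n : ℕ} (X : Fin m → Finset (Fin n)) (δ : ℕ) : Set (Finset (Fin n)) :=
  {C | C.Nonempty ∧ ∀ i, (X i ∩ C).card = 0 ∨ 2 * δ + 1 ≤ (X i ∩ C).card}

lemma wt_restrict {ι F : Type*} [Zero F] [DecidableEq F] [DecidableEq ι]
    (S : Finset ι) (z : ι → F) :
    wt (fun j : {j // j ∈ S} => z j.1) = wtOn S z := by
  classical
  unfold wt wtOn
  apply Finset.card_bij (fun (j : {j // j ∈ S}) _ => j.1)
  · intro a ha
    simp only [Finset.mem_filter, Finset.mem_univ, true_and] at ha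
    exact Finset.mem_filter.2 ⟨a.2, ha⟩
  · intro a _ b _ h; exact Subtype.ext h
  · intro b hb
    simp only [Finset.mem_filter] at hb
    exact ⟨⟨b, hb.1⟩, by simp [hb.2], rfl⟩

lemma wt_triangle {ι F : Type*} [Fintype ι] [AddGroup F] [DecidableEq F] (a b c : ι → F) :
    wt (fun j => a j - c j) ≤ wt (fun j => a j - b j) + wt (fun j => b j - c j) := by
  classical
  unfold wt
  refine le_trans (Finset.card_le_card ?_) (Finset.card_union_le _ _)
  intro j hj
  simp only [Finset.mem_filter, Finset.mem_union, Finset.mem_univ, true_and] at *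
  by_contra h
  push_neg at h
  apply hj
  rw [← sub_add_sub_cancel (a j) (b j) (c j), h.1, h.2, add_zero]

theorem stmt0 {F : Type*} {m n N : ℕ} [Field F] [DecidableEq F]
    (X : Fin m → Finset (Fin n)) (δ : ℕ) (L : Matrix (Fin n) (Fin N) F) :
    (∀ i : Fin m, ∃ D : (Fin N → F) → ({j // j ∈ X i} → F) → ({j // j ∈ X i} → F),
        ∀ (x : Fin n → F) (ε : {j // j ∈ X i} → F), wt ε ≤ δ →
          D (Matrix.vecMul x L) (fun j => x j.1 + ε j) = fun j => x j.1) ↔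
      ValidEncoder X δ L := by
  classical
  constructor
  · -- decoders exist → ValidEncoder
    intro hD z ⟨i, h1, h2⟩ hzL
    obtain ⟨D, hDc⟩ := hD i
    -- support of z on X i, as a finset of the subtype
    set v : {j // j ∈ X i} → F := fun j => z j.1 with hv
    set S : Finset {j // j ∈ X i} := Finset.univ.filter (fun j => v j ≠ 0) with hS
    have hScard : S.card = wtOn (X i) z := by
      rw [hS]; exact wt_restrict (X i) z
    have hs1 : 1 ≤ S.card := hScard ▸ h1
    have hs2 : S.card ≤ 2 * δ := hScard ▸ h2
    obtain ⟨T, hTS, hTcard⟩ :=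
      Finset.exists_subset_card_eq (s := S) (n := min δ S.card) (min_le_right _ _)
    set ε : {j // j ∈ X i} → F := fun j => if j ∈ T then v j else 0 with hε
    set ε' : {j // j ∈ X i} → F := fun j => ε j - v j with hε'
    have hwε : wt ε ≤ δ := by
      unfold wt
      calc (Finset.univ.filter fun j => ε j ≠ 0).card ≤ T.card := by
            apply Finset.card_le_card
            intro j hj
            simp only [Finset.mem_filter, Finset.mem_univ, true_and, hε] at hj
            by_contra hjT
            simp [hjT] at hj
        _ ≤ δ := by rw [hTcard]; exact min_le_left _ _
    have hwε' : wt ε' ≤ δ := by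
      unfold wt
      calc (Finset.univ.filter fun j => ε' j ≠ 0).card ≤ (S \ T).card := by
            apply Finset.card_le_card
            intro j hj
            simp only [Finset.mem_filter, Finset.mem_univ, true_and, hε', hε] at hj
            by_cases hjT : j ∈ T
            · simp [hjT] at hj
            · refine Finset.mem_sdiff.2 ⟨?_, hjT⟩
              simp only [hjT, if_false, zero_sub, neg_ne_zero] at hj
              simp [hS, hj]
        _ = S.card - T.card := Finset.card_sdiff_of_subset hTS
        _ ≤ δ := by rw [hTcard]; omega
    -- two scenarios
    have key1 := hDc (fun _ => 0) ε hwε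
    have key2 := hDc z ε' hwε'
    have hzero : Matrix.vecMul (fun _ => (0:F)) L = Matrix.vecMul z L := by
      rw [hzL]; ext k; simp [Matrix.vecMul, dotProduct]
    have hsame : (fun j : {j // j ∈ X i} => (0:F) + ε j) = fun j => z j.1 + ε' j := by
      funext j; simp [hε', hv]
    have : (fun j : {j // j ∈ X i} => (0:F)) = fun j => z j.1 := by
      rw [← key1, hzero, hsame, key2]
    -- but z has nonzero entry in X i
    obtain ⟨j, hjS⟩ := Finset.card_pos.mp hs1
    simp only [hS, Finset.mem_filter, Finset.mem_univ, true_and, hv] at hjS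
    exact hjS (congrFun this j).symm
  · -- ValidEncoder → decoders exist
    intro hL i
    set P : (Fin N → F) → ({j // j ∈ X i} → F) → ({j // j ∈ X i} → F) → Prop :=
      fun y w v => (∃ x : Fin n → F, Matrix.vecMul x L = y ∧
        (fun j : {j // j ∈ X i} => x j.1) = v) ∧ wt (fun j => w j - v j) ≤ δ with hP
    refine ⟨fun y w => if h : ∃ v, P y w v then h.choose else 0, ?_⟩
    intro x ε hε
    set y := Matrix.vecMul x L
    set w : {j // j ∈ X i} → F := fun j => x j.1 + ε j with hw
    have hex : ∃ v, P y w v := by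
      refine ⟨fun j => x j.1, ⟨x, rfl, rfl⟩, ?_⟩
      have : (fun j : {j // j ∈ X i} => w j - x j.1) = ε := by
        funext j; simp [hw]
      rw [this]; exact hε
    have huniq : ∀ v1 v2, P y w v1 → P y w v2 → v1 = v2 := by
      rintro v1 v2 ⟨⟨x1, hx1, hv1⟩, hd1⟩ ⟨⟨x2, hx2, hv2⟩, hd2⟩
      by_contra hne
      set z : Fin n → F := fun j => x1 j - x2 j with hz
      have hzL : Matrix.vecMul z L = 0 := by
        have : z = x1 - x2 := rfl
        rw [this, Matrix.sub_vecMul, hx1, hx2, sub_self]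
      have hwt : wtOn (X i) z = wt (fun j : {j // j ∈ X i} => v1 j - v2 j) := by
        rw [← wt_restrict]
        congr 1
        funext j
        simp [hz, ← hv1, ← hv2]
      have hub : wtOn (X i) z ≤ 2 * δ := by
        rw [hwt]
        calc wt (fun j : {j // j ∈ X i} => v1 j - v2 j)
            ≤ wt (fun j => v1 j - w j) + wt (fun j => w j - v2 j) := wt_triangle v1 w v2
          _ ≤ δ + δ := by
              refine Nat.add_le_add ?_ hd2
              have heq : wt (fun j : {j // j ∈ X i} => v1 j - w j)
                  = wt (fun j => w j - v1 j) := by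
                unfold wt
                congr 1
                apply Finset.filter_congr
                intro j _
                simp [sub_eq_zero, eq_comm]
              rw [heq]; exact hd1
          _ = 2 * δ := by ring
      have hlb : 1 ≤ wtOn (X i) z := by
        rw [hwt]
        rw [Nat.one_le_iff_ne_zero]
        intro h0
        apply hne
        funext j
        have : (Finset.univ.filter fun k : {j // j ∈ X i} => v1 k - v2 k ≠ 0) = ∅ :=
          Finset.card_eq_zero.mp h0
        by_contra hj
        have hjm : j ∈ (Finset.univ.filter fun k : {j // j ∈ X i} => v1 k - v2 k ≠ 0) := by
          simp [sub_eq_zero, hj]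
        rw [this] at hjm
        exact absurd hjm (Finset.notMem_empty j)
      exact hL z ⟨i, hlb, hub⟩ hzL
    simp only [dif_pos hex]
    have := hex.choose_spec
    have hxcand : P y w (fun j => x j.1) := by
      refine ⟨⟨x, rfl, rfl⟩, ?_⟩
      have : (fun j : {j // j ∈ X i} => w j - x j.1) = ε := by funext j; simp [hw]
      rw [this]; exact hε
    exact huniq _ _ this hxcand
end

section
/- A matrix L ∈ F_q^{n×N} is a valid encoder matrix for the BNSI problem (m,n,X,δ) if and only if for every i ∈ [m], no non-zero linear combination of 2δ or fewer rows of L_{X_i} belongs to the row span of L_{Y_i}, where Y_i = [n] \ X_i. -/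
open Matrix

lemma wt_eq_wtOn {ι F : Type*} [Fintype ι] [Field F] [DecidableEq F]
    (S : Finset ι) (c : ι → F) (h : ∀ j, c j ≠ 0 → j ∈ S) : wt c = wtOn S c := by
  unfold wt wtOn
  congr 1
  ext j
  simp only [Finset.mem_filter, Finset.mem_univ, true_and]
  exact ⟨fun hj => ⟨h j hj, hj⟩, fun hj => hj.2⟩

theorem stmt1 {F : Type*} {m n N : ℕ} [Field F] [DecidableEq F]
    (X : Fin m → Finset (Fin n)) (δ : ℕ) (L : Matrix (Fin n) (Fin N) F) :
    ValidEncoder X δ L ↔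
      ∀ i : Fin m, ∀ c : Fin n → F, (∀ j, c j ≠ 0 → j ∈ X i) → c ≠ 0 → wt c ≤ 2 * δ →
        Matrix.vecMul c L ∉
          Submodule.span F (Set.range fun j : {j // j ∉ X i} => L j.1) := by
  classical
  have vecMul_eq_sum : ∀ v : Fin n → F, Matrix.vecMul v L = ∑ j : Fin n, v j • L j := by
    intro v
    funext k
    simp [Matrix.vecMul, dotProduct, Finset.sum_apply]
  constructor
  · intro hV i c hsupp hc0 hwt hmem
    obtain ⟨f, hf⟩ := (Submodule.mem_span_range_iff_exists_fun F).mp hmem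
    set y : Fin n → F := fun j => if h : j ∈ X i then 0 else f ⟨j, h⟩ with hy
    have hyL : Matrix.vecMul y L = Matrix.vecMul c L := by
      rw [vecMul_eq_sum, ← hf]
      rw [show (∑ j : Fin n, y j • L j) = ∑ j ∈ (X i)ᶜ, y j • L j by
        refine (Finset.sum_subset (Finset.subset_univ _) ?_).symm
        intro j _ hj
        simp only [Finset.mem_compl, not_not] at hj
        simp [hy, hj]]
      rw [Finset.sum_subtype (p := fun j => j ∉ X i) (X i)ᶜ
        (fun j => by simp) (fun j => y j • L j)]
      refine Finset.sum_congr rfl fun j _ => ?_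
      simp [hy, j.2]
    have hz : Matrix.vecMul (c - y) L = 0 := by
      rw [Matrix.sub_vecMul, hyL, sub_self]
    have hwtz : wtOn (X i) (c - y) = wtOn (X i) c := by
      unfold wtOn
      congr 1
      refine Finset.filter_congr fun j hj => ?_
      simp [hy, hj, sub_zero]
    refine hV (c - y) ⟨i, ?_, ?_⟩ hz
    · rw [hwtz]
      have : (Finset.filter (fun j => c j ≠ 0) (X i)).Nonempty := by
        obtain ⟨j, hj⟩ := Function.ne_iff.mp hc0
        exact ⟨j, Finset.mem_filter.mpr ⟨hsupp j hj, hj⟩⟩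
      exact Finset.card_pos.mpr this
    · rw [hwtz, ← wt_eq_wtOn _ _ hsupp]; exact hwt
  · intro h z ⟨i, h1, h2⟩ hzL
    set c : Fin n → F := fun j => if j ∈ X i then z j else 0 with hc
    have hsupp : ∀ j, c j ≠ 0 → j ∈ X i := by
      intro j hj
      by_contra hjX
      simp [hc, hjX] at hj
    have hwtc : wtOn (X i) c = wtOn (X i) z := by
      unfold wtOn
      congr 1
      exact Finset.filter_congr fun j hj => by simp [hc, hj]
    have hc0 : c ≠ 0 := by
      intro hc0
      rw [hc0] at hwtc
      have h0 : wtOn (X i) (0 : Fin n → F) = 0 := by simp [wtOn]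
      rw [h0] at hwtc
      omega
    refine h i c hsupp hc0 ?_ ?_
    · rw [wt_eq_wtOn _ _ hsupp, hwtc]; exact h2
    · have : Matrix.vecMul c L = - Matrix.vecMul (fun j => if j ∈ X i then 0 else z j) L := by
        have hsplit : z = c + fun j => if j ∈ X i then 0 else z j := by
          funext j; by_cases hj : j ∈ X i <;> simp [hc, hj]
        have := congrArg (fun w => Matrix.vecMul w L) hsplit
        simp only [Matrix.add_vecMul, hzL] at this
        linear_combination (norm := module) -this
      rw [this]
      refine Submodule.neg_mem _ ?_
      rw [vecMul_eq_sum]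
      refine Submodule.sum_mem _ fun j _ => ?_
      by_cases hj : j ∈ X i
      · simp [hj]
      · simp only [hj, if_false]
        exact Submodule.smul_mem _ _ (Submodule.subset_span ⟨⟨j, hj⟩, rfl⟩)
end

section
/- Let L be a valid encoder matrix for the BNSI problem (m,n,X,δ) and suppose |X_i| ≤ 2δ for some i. Then rank(L_{X_i}) = |X_i|, rowspan(L_{X_i}) ∩ rowspan(L_{Y_i}) = {0}, and rank(L) = |X_i| + rank(L_{Y_i}), where Y_i = [n] \ X_i. -/
open Matrix

lemma vecMul_eq_sum' {F : Type*} [Field F] {n N : ℕ} (z : Fin n → F)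
    (L : Matrix (Fin n) (Fin N) F) : Matrix.vecMul z L = ∑ j, z j • L j := by
  funext k
  simp [Matrix.vecMul, dotProduct, Finset.sum_apply]

theorem stmt3 {F : Type*} {m n N : ℕ} [Field F] [DecidableEq F]
    (X : Fin m → Finset (Fin n)) (δ : ℕ) (L : Matrix (Fin n) (Fin N) F)
    (hL : ValidEncoder X δ L) (i : Fin m) (hXi : (X i).card ≤ 2 * δ) :
    Module.finrank F
        (Submodule.span F (Set.range fun j : {j // j ∈ X i} => L j.1)) = (X i).card ∧
    Submodule.span F (Set.range fun j : {j // j ∈ X i} => L j.1) ⊓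
        Submodule.span F (Set.range fun j : {j // j ∉ X i} => L j.1) = ⊥ ∧
    Module.finrank F (Submodule.span F (Set.range fun j : Fin n => L j)) =
      (X i).card +
        Module.finrank F
          (Submodule.span F (Set.range fun j : {j // j ∉ X i} => L j.1)) := by
  set vX : {j // j ∈ X i} → (Fin N → F) := fun j => L j.1 with hvX
  set vY : {j // j ∉ X i} → (Fin N → F) := fun j => L j.1 with hvY
  have key : ∀ z : Fin n → F, (∃ j ∈ X i, z j ≠ 0) → ∑ j, z j • L j ≠ 0 := by
    intro z ⟨j, hj, hzj⟩
    rw [← vecMul_eq_sum']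
    refine hL z ⟨i, ?_, ?_⟩
    · exact Finset.card_pos.mpr ⟨j, Finset.mem_filter.mpr ⟨hj, hzj⟩⟩
    · exact le_trans (Finset.card_le_card (Finset.filter_subset _ _)) hXi
  -- part 1: linear independence
  have hli : LinearIndependent F vX := by
    rw [Fintype.linearIndependent_iff]
    intro c hc
    by_contra hcn
    push_neg at hcn
    obtain ⟨j0, hj0⟩ := hcn
    set z : Fin n → F := fun j => if h : j ∈ X i then c ⟨j, h⟩ else 0 with hz
    have hsum : ∑ j, z j • L j = ∑ j, c j • vX j := by
      rw [← Finset.sum_subset (Finset.subset_univ (X i))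
        (by intro j _ hj; simp [hz, hj])]
      rw [← Finset.sum_attach (X i) (fun j => z j • L j)]
      exact Finset.sum_congr rfl fun j _ => by simp [hz, j.2, hvX]
    exact key z ⟨j0.1, j0.2, by simpa [hz, j0.2] using hj0⟩ (hsum.trans hc)
  have h1 : Module.finrank F (Submodule.span F (Set.range vX)) = (X i).card := by
    rw [finrank_span_eq_card hli, Fintype.card_coe]
  -- part 2: trivial intersection
  have h2 : Submodule.span F (Set.range vX) ⊓ Submodule.span F (Set.range vY) = ⊥ := by
    rw [eq_bot_iff]
    intro x hx
    obtain ⟨hxX, hxY⟩ := Submodule.mem_inf.mp hx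
    rw [Submodule.mem_span_range_iff_exists_fun] at hxX hxY
    obtain ⟨a, ha⟩ := hxX
    obtain ⟨b, hb⟩ := hxY
    set z : Fin n → F := fun j => if h : j ∈ X i then a ⟨j, h⟩ else -b ⟨j, h⟩ with hz
    have hsum : ∑ j, z j • L j = 0 := by
      rw [← Finset.sum_add_sum_compl (X i) (fun j => z j • L j)]
      have e1 : ∑ j ∈ X i, z j • L j = x := by
        rw [← Finset.sum_attach (X i) (fun j => z j • L j)]
        rw [← ha]
        exact Finset.sum_congr rfl fun j _ => by simp [hz, j.2, hvX]
      have e2 : ∑ j ∈ (X i)ᶜ, z j • L j = -x := by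
        rw [Finset.sum_subtype _ (fun j => Finset.mem_compl) (fun j => z j • L j)]
        calc ∑ j : {j // j ∉ X i}, z j.1 • L j.1
            = ∑ j : {j // j ∉ X i}, -(b j • vY j) :=
              Finset.sum_congr rfl fun j _ => by simp [hz, j.2, hvY]
          _ = -x := by rw [← hb, Finset.sum_neg_distrib]
      rw [e1, e2, add_neg_cancel]
    by_contra hxn
    have haz : ∃ j ∈ X i, z j ≠ 0 := by
      by_contra hno
      push_neg at hno
      apply hxn
      rw [Submodule.mem_bot, ← ha]
      refine Finset.sum_eq_zero fun j _ => ?_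
      have h0 : a j = 0 := by simpa [hz, j.2] using hno j.1 j.2
      simp [h0]
    exact key z haz hsum
  -- part 3
  have hfinX : FiniteDimensional F (Submodule.span F (Set.range vX)) :=
    FiniteDimensional.span_of_finite F (Set.finite_range _)
  have hfinY : FiniteDimensional F (Submodule.span F (Set.range vY)) :=
    FiniteDimensional.span_of_finite F (Set.finite_range _)
  have hrange : (Set.range fun j : Fin n => L j) = Set.range vX ∪ Set.range vY := by
    ext x
    constructor
    · rintro ⟨j, rfl⟩
      by_cases h : j ∈ X i
      · exact Or.inl ⟨⟨j, h⟩, rfl⟩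
      · exact Or.inr ⟨⟨j, h⟩, rfl⟩
    · rintro (⟨j, rfl⟩ | ⟨j, rfl⟩) <;> exact ⟨j.1, rfl⟩
  have h3 : Module.finrank F (Submodule.span F (Set.range fun j : Fin n => L j)) =
      (X i).card + Module.finrank F (Submodule.span F (Set.range vY)) := by
    rw [hrange, Submodule.span_union]
    have := Submodule.finrank_sup_add_finrank_inf_eq
      (Submodule.span F (Set.range vX)) (Submodule.span F (Set.range vY))
    rw [h2, finrank_bot, add_zero] at this
    rw [this, h1]
  exact ⟨h1, h2, h3⟩
end

section
/- Let L be a valid encoder matrix for the BNSI problem (m,n,X,δ) and fix i ∈ [m]. Let H_i be a parity check matrix of the code rowspan(L_{Y_i}) (i.e., H_i L_{Y_i}^T = 0 and the null space of H_i under right-multiplication by transposes equals rowspan(L_{Y_i})), and set A_i = H_i L_{X_i}^T. Then for any two distinct vectors ε, ε' ∈ F_q^{|X_i|} each of Hamming weight at most δ, we have A_i ε^T ≠ A_i ε'^T. -/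
open Matrix

theorem stmt4 {F : Type*} {m n N r : ℕ} [Field F] [DecidableEq F]
    (X : Fin m → Finset (Fin n)) (δ : ℕ) (L : Matrix (Fin n) (Fin N) F)
    (hL : ValidEncoder X δ L) (i : Fin m) (H : Matrix (Fin r) (Fin N) F)
    (hH : ∀ v : Fin N → F, Matrix.mulVec H v = 0 ↔
      v ∈ Submodule.span F (Set.range fun j : {j // j ∉ X i} => L j.1))
    (ε ε' : {j // j ∈ X i} → F) (hne : ε ≠ ε') (hwt : wt ε ≤ δ) (hwt' : wt ε' ≤ δ) :
    Matrix.mulVec H (fun k => ∑ j, ε j * L j.1 k) ≠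
      Matrix.mulVec H (fun k => ∑ j, ε' j * L j.1 k) := by
  intro heq
  set d : {j // j ∈ X i} → F := fun j => ε j - ε' j with hd
  have hdne : d ≠ 0 := by
    intro h
    apply hne
    funext j
    have := congrFun h j
    simpa [hd, sub_eq_zero] using this
  have hmem : (fun k => ∑ j, d j * L j.1 k) ∈
      Submodule.span F (Set.range fun j : {j // j ∉ X i} => L j.1) := by
    rw [← hH]
    have hsplit : (fun k => ∑ j, d j * L j.1 k) =
        (fun k => ∑ j, ε j * L j.1 k) - (fun k => ∑ j, ε' j * L j.1 k) := by
      funext k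
      simp [hd, sub_mul, Finset.sum_sub_distrib]
    rw [hsplit, Matrix.mulVec_sub, heq, sub_self]
  rw [Submodule.mem_span_range_iff_exists_fun] at hmem
  obtain ⟨c, hc⟩ := hmem
  classical
  set z : Fin n → F := fun j => if h : j ∈ X i then d ⟨j, h⟩ else -c ⟨j, h⟩ with hz
  have hzero : Matrix.vecMul z L = 0 := by
    funext k
    have h1 : ∑ j ∈ X i, z j * L j k = ∑ j : {j // j ∈ X i}, d j * L j.1 k := by
      rw [Finset.sum_subtype (X i) (fun x => Iff.rfl)]
      refine Finset.sum_congr rfl fun j _ => ?_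
      simp [hz, j.2]
    have h2 : ∑ j ∈ (X i)ᶜ, z j * L j k = ∑ j : {j // j ∉ X i}, -c j * L j.1 k := by
      rw [Finset.sum_subtype ((X i)ᶜ) (fun x => Finset.mem_compl)]
      refine Finset.sum_congr rfl fun j _ => ?_
      simp [hz, j.2]
    have hcc : ∑ j : {j // j ∉ X i}, c j * L j.1 k = ∑ j : {j // j ∈ X i}, d j * L j.1 k := by
      have := congrFun hc k
      simpa [Finset.sum_apply] using this
    have htot : ∑ j ∈ X i, z j * L j k + ∑ j ∈ (X i)ᶜ, z j * L j k = ∑ j, z j * L j k :=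
      Finset.sum_add_sum_compl (X i) _
    have : Matrix.vecMul z L k = ∑ j, z j * L j k := rfl
    rw [Pi.zero_apply, this, ← htot, h1, h2]
    simp only [neg_mul, Finset.sum_neg_distrib, hcc]
    ring
  have hwtd : wtOn (X i) z = wt d := by
    unfold wtOn wt
    refine Finset.card_bij' (fun j hj => ⟨j, (Finset.mem_filter.mp hj).1⟩)
      (fun j _ => j.1) ?_ ?_ ?_ ?_
    · intro j hj
      have := (Finset.mem_filter.mp hj).2
      simp only [Finset.mem_filter, Finset.mem_univ, true_and]
      intro h0
      apply this
      simp [hz, (Finset.mem_filter.mp hj).1, h0]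
    · intro j hj
      have h0 := (Finset.mem_filter.mp hj).2
      refine Finset.mem_filter.mpr ⟨j.2, ?_⟩
      simpa [hz, j.2] using h0
    · intro j hj; rfl
    · intro j hj; rfl
  have hge : 1 ≤ wtOn (X i) z := by
    rw [hwtd]
    have : ∃ j, d j ≠ 0 := by
      by_contra h
      push_neg at h
      exact hdne (funext fun j => h j)
    obtain ⟨j, hj⟩ := this
    have : j ∈ Finset.univ.filter fun j => d j ≠ 0 := by simp [hj]
    exact Finset.card_pos.mpr ⟨j, this⟩
  have hle : wtOn (X i) z ≤ 2 * δ := by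
    rw [hwtd]
    have hsub : (Finset.univ.filter fun j => d j ≠ 0) ⊆
        (Finset.univ.filter fun j => ε j ≠ 0) ∪ (Finset.univ.filter fun j => ε' j ≠ 0) := by
      intro j hj
      have := (Finset.mem_filter.mp hj).2
      simp only [Finset.mem_union, Finset.mem_filter, Finset.mem_univ, true_and]
      by_contra h
      push_neg at h
      exact this (by simp [hd, h.1, h.2])
    calc wt d ≤ _ := Finset.card_le_card hsub
      _ ≤ wt ε + wt ε' := Finset.card_union_le _ _
      _ ≤ 2 * δ := by omega
  exact hL z ⟨i, hge, hle⟩ hzero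
end

section
/- Let L be a valid encoder matrix for the BNSI problem (m,n,X,δ). Fix i ∈ [m] and consider the derived BNSI problem obtained by removing the symbols indexed by X_i: it has receivers u_j for j ≠ i with demand sets X'_j = X_j \ X_i, over the message index set [n] \ X_i. Then the submatrix L_{Y_i} (rows of L indexed by Y_i = [n]\X_i) is a valid encoder matrix for the derived BNSI problem with the same error bound δ. -/
open Matrix

theorem stmt5 {F : Type*} {m n N : ℕ} [Field F] [DecidableEq F]
    (X : Fin m → Finset (Fin n)) (δ : ℕ) (L : Matrix (Fin n) (Fin N) F)
    (hL : ValidEncoder X δ L) (i : Fin m) :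
    ValidEncoder (fun j : {j : Fin m // j ≠ i} => (X j.1).subtype fun k => k ∉ X i) δ
      (fun (j : {k : Fin n // k ∉ X i}) (k : Fin N) => L j.1 k) := by
  intro z ⟨j, h1, h2⟩ hzero
  set z' : Fin n → F := fun k => if h : k ∉ X i then z ⟨k, h⟩ else 0 with hz'
  have hwt : ∀ t : Fin m, wtOn (X t) z' =
      wtOn ((X t).subtype fun k => k ∉ X i) z := by
    intro t
    unfold wtOn
    apply Finset.card_bij (fun k hk => (⟨k, by
      simp only [Finset.mem_filter] at hk
      by_contra h
      simp [z', h] at hk⟩ : {k : Fin n // k ∉ X i}))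
    · intro k hk
      simp only [Finset.mem_filter, Finset.mem_subtype] at hk ⊢
      refine ⟨hk.1, ?_⟩
      have := hk.2
      simp only [z'] at this
      split at this
      · exact this
      · simp at this
    · intro a ha b hb hab
      simpa using congrArg Subtype.val hab
    · intro b hb
      simp only [Finset.mem_filter, Finset.mem_subtype] at hb
      exact ⟨b.1, by simp [Finset.mem_filter, z', b.2, hb.1, hb.2], rfl⟩
  have hmul : Matrix.vecMul z' L =
      Matrix.vecMul z (fun (j : {k : Fin n // k ∉ X i}) (k : Fin N) => L j.1 k) := by
    funext c
    simp only [Matrix.vecMul, dotProduct]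
    rw [← Finset.sum_filter_of_ne (p := fun k => k ∉ X i)
      (fun k _ hk h => by simp [z', h] at hk),
      Finset.sum_subtype (p := fun k => k ∉ X i) (Finset.univ.filter fun k => k ∉ X i)
      (fun k => by simp) (fun k => z' k * L k c)]
    exact Finset.sum_congr rfl fun k _ => by simp [z', k.2]
  exact hL z' ⟨j.1, by rw [hwt j.1]; exact ⟨h1, h2⟩⟩ (by rw [hmul]; exact hzero)
end

section
/- Suppose an (m,n,X,δ) BNSI problem satisfies |X_i| ≥ 2δ+1 for all i ∈ [m]. Let L ∈ F_q^{n×(n-1)} be the matrix whose first n−1 rows form the identity I_{n-1} and whose last row is the all-ones vector of length n−1. Then L is a valid encoder matrix for this BNSI problem; in particular the optimal linear codelength satisfies N_{q,opt} ≤ n−1. -/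
open Matrix

theorem stmt6 {F : Type*} {m n : ℕ} [Field F] [DecidableEq F]
    (X : Fin m → Finset (Fin n)) (δ : ℕ) (hX : ∀ i, 2 * δ + 1 ≤ (X i).card) :
    ValidEncoder X δ (fun (j : Fin n) (k : Fin (n - 1)) =>
        if (j : ℕ) = (k : ℕ) then (1 : F) else if (j : ℕ) = n - 1 then 1 else 0) ∧
      Nopt F X δ ≤ n - 1 := by
  have hvalid : ValidEncoder X δ (fun (j : Fin n) (k : Fin (n - 1)) =>
      if (j : ℕ) = (k : ℕ) then (1 : F) else if (j : ℕ) = n - 1 then 1 else 0) := by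
    intro z ⟨i, h1, h2⟩ hL
    obtain ⟨j0, hj0⟩ : ∃ j, j ∈ (X i).filter fun j => z j ≠ 0 :=
      Finset.card_pos.mp h1
    simp only [Finset.mem_filter] at hj0
    have hn : 0 < n := j0.pos
    have hlast : n - 1 < n := by omega
    set last : Fin n := ⟨n - 1, hlast⟩ with hlastdef
    have key : ∀ k : Fin (n - 1), z ⟨(k : ℕ), by omega⟩ + z last = 0 := by
      intro k
      have hc := congrFun hL k
      have hk : (k : ℕ) < n - 1 := k.2
      have : Matrix.vecMul z (fun (j : Fin n) (k : Fin (n - 1)) =>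
          if (j : ℕ) = (k : ℕ) then (1 : F) else if (j : ℕ) = n - 1 then 1 else 0) k
          = z ⟨(k : ℕ), by omega⟩ + z last := by
        simp only [Matrix.vecMul, dotProduct]
        have : ∀ j : Fin n,
            z j * (if (j : ℕ) = (k : ℕ) then (1 : F) else if (j : ℕ) = n - 1 then 1 else 0)
            = (if j = ⟨(k : ℕ), by omega⟩ then z j else 0) + (if j = last then z j else 0) := by
          intro j
          have h2' : (⟨(k : ℕ), by omega⟩ : Fin n) ≠ last := by
            simp only [hlastdef, ne_eq, Fin.mk.injEq]; omega
          rcases eq_or_ne (j : ℕ) (k : ℕ) with h | h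
          · have h1 : j = ⟨(k : ℕ), by omega⟩ := Fin.ext h
            have h2 : j ≠ last := h1 ▸ h2'
            simp [h, h1, h2, h2']
          · have h1 : j ≠ ⟨(k : ℕ), by omega⟩ := fun hh => h (by rw [hh])
            rcases eq_or_ne (j : ℕ) (n - 1) with h3 | h3
            · have h4 : j = last := Fin.ext h3
              simp [h, h1, h3, h4, Ne.symm h2', show (last : ℕ) = n - 1 from rfl]
            · have h4 : j ≠ last := fun hh => h3 (by rw [hh])
              simp [h, h1, h3, h4]
        rw [Finset.sum_congr rfl fun j _ => this j, Finset.sum_add_distrib,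
          Finset.sum_ite_eq' _ _ z, Finset.sum_ite_eq' _ _ z]
        simp
      rw [this] at hc
      simpa using hc
    by_cases hz : z last = 0
    · have hzero : ∀ j : Fin n, z j = 0 := by
        intro j
        rcases lt_or_ge (j : ℕ) (n - 1) with h | h
        · have := key ⟨(j : ℕ), h⟩
          rw [hz, add_zero] at this
          simpa using this
        · have : j = last := Fin.ext (by show (j : ℕ) = n - 1; omega)
          rw [this, hz]
      exact hj0.2 (hzero j0)
    · have hall : ∀ j : Fin n, z j ≠ 0 := by
        intro j
        rcases lt_or_ge (j : ℕ) (n - 1) with h | h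
        · have := key ⟨(j : ℕ), h⟩
          intro hzj
          simp only [show (⟨((⟨(j : ℕ), h⟩ : Fin (n-1)) : ℕ), by omega⟩ : Fin n) = j from Fin.ext rfl] at this
          rw [hzj, zero_add] at this
          exact hz this
        · have : j = last := Fin.ext (by show (j : ℕ) = n - 1; omega)
          rw [this]; exact hz
      have : wtOn (X i) z = (X i).card := by
        unfold wtOn
        congr 1
        exact Finset.filter_true_of_mem fun j _ => hall j
      have := hX i
      omega
  refine ⟨hvalid, Nat.sInf_le ⟨_, hvalid⟩⟩
end

section
/- Let B be the bipartite graph of an (m,n,X,δ) BNSI problem and define Φ(B) as the collection of non-empty subsets C ⊆ [n] such that for every i ∈ [m], |X_i ∩ C| is either 0 or at least 2δ+1. If Φ(B) is empty, then every valid encoder matrix L ∈ F_q^{n×N} for the problem has rank(L) = n; consequently the optimal linear codelength equals n. -/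
open Matrix

theorem stmt7 {F : Type*} {m n : ℕ} [Field F] [DecidableEq F]
    (X : Fin m → Finset (Fin n)) (δ : ℕ) (hX : ∀ i, (X i).Nonempty)
    (hPhi : Phi X δ = ∅) :
    (∀ {N : ℕ} (L : Matrix (Fin n) (Fin N) F), ValidEncoder X δ L → L.rank = n) ∧
      Nopt F X δ = n := by
  have hrank : ∀ {N : ℕ} (L : Matrix (Fin n) (Fin N) F), ValidEncoder X δ L → L.rank = n := by
    intro N L hL
    have hker : ∀ z : Fin n → F, Matrix.vecMul z L = 0 → z = 0 := by
      intro z hz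
      by_contra hz0
      set C : Finset (Fin n) := Finset.univ.filter (fun j => z j ≠ 0) with hC
      have hCne : C.Nonempty := by
        obtain ⟨j, hj⟩ := Function.ne_iff.mp hz0
        exact ⟨j, by simp [hC]; simpa using hj⟩
      have hCnot : C ∉ Phi X δ := by simp [hPhi]
      rw [Phi, Set.mem_setOf_eq, not_and_or] at hCnot
      rcases hCnot with h | h
      · exact h hCne
      push_neg at h
      obtain ⟨i, h1, h2⟩ := h
      have hw : wtOn (X i) z = (X i ∩ C).card := by
        rw [wtOn]
        congr 1
        ext j
        simp [hC, Finset.mem_filter, Finset.mem_inter]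
      exact hL z ⟨i, by omega, by omega⟩ hz
    have hinj : Function.Injective (Lᵀ.mulVecLin) := by
      rw [injective_iff_map_eq_zero]
      intro z hz
      apply hker
      rw [← Matrix.mulVec_transpose]
      exact hz
    rw [← Matrix.rank_transpose, Matrix.rank, LinearMap.finrank_range_of_inj hinj]
    simp
  refine ⟨hrank, ?_⟩
  have hmem : n ∈ {N : ℕ | ∃ L : Matrix (Fin n) (Fin N) F, ValidEncoder X δ L} := by
    refine ⟨1, ?_⟩
    intro z ⟨i, h1, h2⟩
    rw [Matrix.vecMul_one]
    intro h0
    rw [wtOn] at h1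
    obtain ⟨j, hj⟩ := Finset.card_pos.mp h1
    simp [h0] at hj
  apply le_antisymm (Nat.sInf_le hmem)
  have := Nat.sInf_mem ⟨n, hmem⟩
  obtain ⟨L, hL⟩ := this
  have := hrank L hL
  have h2 := L.rank_le_width
  omega
end

section
/- Let B be the bipartite graph of an (m,n,X,δ) BNSI problem and Φ(B) the collection of non-empty C ⊆ [n] with |X_i ∩ C| ∉ {1,...,2δ} for all i ∈ [m]. If Φ(B) is non-empty, then there exists a valid linear encoder of codelength n−1; hence N_{q,opt} < n. -/
open Matrix

lemma key {F : Type*} {m n : ℕ} [Field F] [DecidableEq F]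
    (X : Fin m → Finset (Fin (n+1))) (δ : ℕ) (C : Finset (Fin (n+1)))
    (hC : C ∈ Phi X δ) :
    ∃ L : Matrix (Fin (n+1)) (Fin n) F, ValidEncoder X δ L := by
  obtain ⟨⟨c₀, hc₀⟩, hmeet⟩ := hC
  refine ⟨fun j k => (if c₀.succAbove k = j then 1 else 0) +
      (if c₀.succAbove k ∈ C then (if j = c₀ then 1 else 0) else 0), ?_⟩
  rintro z ⟨i, h1, h2⟩ hzero
  have hval : ∀ k : Fin n, z (c₀.succAbove k) +
      (if c₀.succAbove k ∈ C then z c₀ else 0) = 0 := by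
    intro k
    have := congrFun hzero k
    simp only [vecMul, dotProduct, mul_add, mul_ite, mul_one, mul_zero] at this
    rw [Finset.sum_add_distrib, Finset.sum_ite_eq Finset.univ (c₀.succAbove k) z] at this
    simpa using this
  have hj : ∀ j : Fin (n+1), j ≠ c₀ → z j + (if j ∈ C then z c₀ else 0) = 0 := by
    intro j hj
    obtain ⟨k, hk⟩ := Fin.exists_succAbove_eq hj
    rw [← hk]; exact hval k
  by_cases hz0 : z c₀ = 0
  · have hall : ∀ j, z j = 0 := by
      intro j
      by_cases h : j = c₀
      · rw [h]; exact hz0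
      · have := hj j h
        split_ifs at this with h' <;> simpa [hz0] using this
    have : wtOn (X i) z = 0 := by
      simp [wtOn, Finset.filter_eq_empty_iff, hall]
    omega
  · have hsupp : ∀ j, z j ≠ 0 ↔ j ∈ C := by
      intro j
      by_cases h : j = c₀
      · subst h; simp [hz0, hc₀]
      · have := hj j h
        split_ifs at this with h'
        · have hzj : z j = -z c₀ := eq_neg_of_add_eq_zero_left this
          simp [hzj, hz0, h']
        · have hzj : z j = 0 := by simpa using this
          simp [hzj, h']
    have hcard : wtOn (X i) z = (X i ∩ C).card := by
      unfold wtOn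
      congr 1
      ext j
      simp [Finset.mem_filter, Finset.mem_inter, hsupp]
    rcases hmeet i with h | h <;> omega

theorem stmt8 {F : Type*} {m n : ℕ} [Field F] [DecidableEq F]
    (X : Fin m → Finset (Fin n)) (δ : ℕ) (hPhi : (Phi X δ).Nonempty) :
    (∃ L : Matrix (Fin n) (Fin (n - 1)) F, ValidEncoder X δ L) ∧
      Nopt F X δ < n := by
  obtain ⟨C, hC⟩ := hPhi
  match n, X, C, hC with
  | 0, X, C, hC => exact (hC.1.choose).elim0
  | n+1, X, C, hC =>
    obtain ⟨L, hL⟩ := key (F := F) X δ C hC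
    refine ⟨⟨L, hL⟩, ?_⟩
    have hle : Nopt F X δ ≤ n := Nat.sInf_le ⟨L, hL⟩
    omega
end

section
/- For an (m,n,X,δ) BNSI problem with bipartite graph B, the optimal linear codelength over F_q equals n if and only if Φ(B) is empty, where Φ(B) is the set of non-empty C ⊆ [n] such that for every i ∈ [m], |X_i ∩ C| = 0 or |X_i ∩ C| ≥ 2δ+1. -/
open Matrix

lemma valid_id {F : Type*} {m n : ℕ} [Field F] [DecidableEq F]
    (X : Fin m → Finset (Fin n)) (δ : ℕ) :
    ValidEncoder X δ (1 : Matrix (Fin n) (Fin n) F) := by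
  intro z ⟨i, h1, _⟩ hz
  rw [Matrix.vecMul_one] at hz
  have : (Finset.filter (fun j => z j ≠ 0) (X i)).Nonempty :=
    Finset.card_pos.mp (by exact h1)
  obtain ⟨j, hj⟩ := this
  exact (Finset.mem_filter.mp hj).2 (by rw [hz]; rfl)

theorem stmt9 {F : Type*} {m n : ℕ} [Field F] [DecidableEq F]
    (X : Fin m → Finset (Fin n)) (δ : ℕ) (hX : ∀ i, (X i).Nonempty) :
    Nopt F X δ = n ↔ Phi X δ = ∅ := by
  have hmem : n ∈ {N : ℕ | ∃ L : Matrix (Fin n) (Fin N) F, ValidEncoder X δ L} :=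
    ⟨1, valid_id X δ⟩
  constructor
  · -- Nopt = n → Phi = ∅
    intro hN
    by_contra hPhi
    obtain ⟨C, hCne, hC⟩ := Set.nonempty_iff_ne_empty.mpr hPhi
    obtain ⟨j0, hj0⟩ := hCne
    -- n = n'+1
    obtain ⟨n', rfl⟩ : ∃ n', n = n' + 1 := by
      cases n with
      | zero => exact absurd j0.2 (by omega)
      | succ k => exact ⟨k, rfl⟩
    set L : Matrix (Fin (n' + 1)) (Fin n') F := fun i k =>
      (if i = j0.succAbove k then (1 : F) else 0) -
        (if j0.succAbove k ∈ C then (if i = j0 then (1 : F) else 0) else 0) with hLdef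
    have hvalid : ValidEncoder X δ L := by
      intro z ⟨i, h1, h2⟩ hz
      -- from z ⬝ L = 0 deduce z j = (if j ∈ C then z j0 else 0)
      have key : ∀ j : Fin (n' + 1), z j = if j ∈ C then z j0 else 0 := by
        intro j
        by_cases hj : j = j0
        · simp [hj, hj0]
        · obtain ⟨k, rfl⟩ := Fin.exists_succAbove_eq (Ne.symm (fun h => hj h.symm))
          have hk := congrFun hz k
          simp only [Matrix.vecMul, dotProduct, hLdef, Pi.zero_apply] at hk
          by_cases hc : j0.succAbove k ∈ C
          · simp only [hc, if_true, mul_sub, mul_ite, mul_one, mul_zero,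
              Finset.sum_sub_distrib, Finset.sum_ite_eq', Finset.mem_univ, if_true] at hk
            simp only [hc, if_true]
            exact sub_eq_zero.mp hk
          · simp only [hc, if_false, mul_sub, mul_ite, mul_one, mul_zero, sub_zero,
              Finset.sum_ite_eq', Finset.mem_univ, if_true] at hk
            simp [hc, hk]
      by_cases hz0 : z j0 = 0
      · have : ∀ j, z j = 0 := by
          intro j; rw [key j]; split <;> simp [hz0]
        have : wtOn (X i) z = 0 := by
          unfold wtOn
          rw [Finset.card_eq_zero, Finset.filter_eq_empty_iff]
          intro j _; simp [this j]
        omega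
      · have hw : wtOn (X i) z = (X i ∩ C).card := by
          unfold wtOn
          congr 1
          ext j
          simp only [Finset.mem_filter, Finset.mem_inter]
          constructor
          · rintro ⟨hjX, hjz⟩
            refine ⟨hjX, ?_⟩
            by_contra hjC
            exact hjz (by rw [key j]; simp [hjC])
          · rintro ⟨hjX, hjC⟩
            exact ⟨hjX, by rw [key j]; simp [hjC, hz0]⟩
        rcases hC i with h | h <;> omega
    have hle : Nopt F X δ ≤ n' := Nat.sInf_le ⟨L, hvalid⟩
    omega
  · -- Phi = ∅ → Nopt = n
    intro hPhi
    refine le_antisymm (Nat.sInf_le hmem) (le_csInf ⟨n, hmem⟩ ?_)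
    rintro N ⟨L, hL⟩
    by_contra hlt
    push_neg at hlt
    -- kernel of vecMulLinear is nontrivial
    have hker : LinearMap.ker L.vecMulLinear ≠ ⊥ := by
      intro hbot
      have hinj : Function.Injective L.vecMulLinear :=
        LinearMap.ker_eq_bot.mp hbot
      have := LinearMap.finrank_le_finrank_of_injective hinj
      simp [Module.finrank_fin_fun] at this
      omega
    obtain ⟨z, hzker, hz0⟩ := Submodule.exists_mem_ne_zero_of_ne_bot hker
    have hzL : Matrix.vecMul z L = 0 := hzker
    set C : Finset (Fin n) := Finset.univ.filter (fun j => z j ≠ 0) with hCdef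
    have hCne : C.Nonempty := by
      rw [Finset.filter_nonempty_iff]
      by_contra h
      push_neg at h
      exact hz0 (funext fun j => by simpa using h j (Finset.mem_univ j))
    have hCPhi : C ∈ Phi X δ := by
      refine ⟨hCne, fun i => ?_⟩
      have hw : (X i ∩ C).card = wtOn (X i) z := by
        unfold wtOn
        congr 1
        ext j
        simp [hCdef, Finset.mem_inter, Finset.mem_filter, and_comm]
      by_contra hcon
      push_neg at hcon
      obtain ⟨hne0, hlt'⟩ := hcon
      exact hL z ⟨i, by omega, by omega⟩ hzL
    rw [hPhi] at hCPhi
    exact hCPhi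
end

section
/- Let H be the parity check matrix of a linear [n, k', d_min] code over F_q with d_min ≥ 2δ + max_{i∈[m]}(n − |X_i|) + 1. Then L = H^T is a valid encoder matrix for the (m,n,X,δ) BNSI problem. -/
open Matrix

theorem stmt12 {F : Type*} {m n r : ℕ} [Field F] [DecidableEq F]
    (X : Fin m → Finset (Fin n)) (δ : ℕ) (d : ℕ) (H : Matrix (Fin r) (Fin n) F)
    (hH : ∀ c : Fin n → F, c ≠ 0 → wt c < d → Matrix.vecMul c Hᵀ ≠ 0)
    (hd : ∀ i, 2 * δ + (n - (X i).card) + 1 ≤ d) :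
    ValidEncoder X δ Hᵀ := by
  intro z ⟨i, h1, h2⟩
  have hz : z ≠ 0 := by
    intro h; subst h
    simp [wtOn] at h1
  apply hH z hz
  have hsplit : wt z = wtOn (X i) z + wtOn (X i)ᶜ z := by
    unfold wt wtOn
    rw [← Finset.card_union_of_disjoint]
    · congr 1
      rw [← Finset.filter_union, Finset.union_compl]
    · exact Finset.disjoint_filter_filter (disjoint_compl_right)
  have hc : wtOn (X i)ᶜ z ≤ n - (X i).card := by
    unfold wtOn
    calc ((X i)ᶜ.filter fun j => z j ≠ 0).card ≤ (X i)ᶜ.card := Finset.card_filter_le _ _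
    _ = n - (X i).card := by simp [Finset.card_compl]
  have := hd i
  omega
end

section
/- For an (m,n,X,δ) BNSI problem over F_q with q ≥ n, the optimal linear codelength satisfies N_{q,opt} ≤ n − min_{i∈[m]} max(|X_i| − 2δ, 0). -/
open Matrix

/-- A vector over `Fin n` whose weight is at most `N` and which is orthogonal to all
the power vectors `(β j ^ t)_j`, `t < N`, for injective `β`, must be zero. -/
lemma zero_of_low_wt {F : Type*} [Field F] [DecidableEq F] {n N : ℕ}
    (β : Fin n → F) (hβ : Function.Injective β) (z : Fin n → F)
    (hwt : wt z ≤ N)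
    (h : ∀ t : Fin N, ∑ j, z j * β j ^ (t : ℕ) = 0) : z = 0 := by
  set S := Finset.univ.filter (fun j => z j ≠ 0) with hS
  have hcard : S.card ≤ N := hwt
  let e : Fin S.card ≃ S := S.equivFin.symm
  have hf : Function.Injective (fun a : Fin S.card => β ((e a : S) : Fin n)) := by
    intro a b hab
    exact e.injective (Subtype.ext (hβ hab))
  have key : ∀ t : Fin S.card,
      ∑ a, (fun a : Fin S.card => z ((e a : S) : Fin n)) a *
        (fun a : Fin S.card => β ((e a : S) : Fin n)) a ^ (t : ℕ) = 0 := by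
    intro t
    have ht : (t : ℕ) < N := lt_of_lt_of_le t.isLt hcard
    have h1 : ∑ a : Fin S.card, z ((e a : S) : Fin n) * β ((e a : S) : Fin n) ^ (t : ℕ)
        = ∑ b : S, z (b : Fin n) * β (b : Fin n) ^ (t : ℕ) :=
      Fintype.sum_equiv e _ _ (fun a => rfl)
    have h2 : ∑ b : S, z (b : Fin n) * β (b : Fin n) ^ (t : ℕ)
        = ∑ j ∈ S, z j * β j ^ (t : ℕ) := Finset.sum_coe_sort S (fun j => z j * β j ^ (t : ℕ))
    have h3 : ∑ j ∈ S, z j * β j ^ (t : ℕ) = ∑ j, z j * β j ^ (t : ℕ) := by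
      refine Finset.sum_subset (Finset.subset_univ S) (fun x _ hx => ?_)
      have : z x = 0 := by
        by_contra hzx
        exact hx (by simp [hS, hzx])
      simp [this]
    show ∑ a : Fin S.card, z ((e a : S) : Fin n) * β ((e a : S) : Fin n) ^ (t : ℕ) = 0
    rw [h1, h2, h3]
    exact h ⟨t, ht⟩
  have hv := Matrix.eq_zero_of_forall_pow_sum_mul_pow_eq_zero hf key
  funext j
  simp only [Pi.zero_apply]
  by_contra hj
  have hjS : j ∈ S := by simp [hS, hj]
  have := congrFun hv (e.symm ⟨j, hjS⟩)
  simp only [Equiv.apply_symm_apply] at this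
  exact hj this

theorem stmt13 {F : Type*} {m n : ℕ} [Field F] [DecidableEq F] [Fintype F]
    (X : Fin m → Finset (Fin n)) (δ : ℕ) (hm : 0 < m) (hq : n ≤ Fintype.card F) :
    Nopt F X δ ≤
      n - Finset.univ.inf' (Finset.univ_nonempty_iff.mpr ⟨⟨0, hm⟩⟩)
        (fun i : Fin m => (X i).card - 2 * δ) := by
  set k := Finset.univ.inf' (Finset.univ_nonempty_iff.mpr ⟨⟨0, hm⟩⟩)
    (fun i : Fin m => (X i).card - 2 * δ) with hk
  obtain ⟨emb⟩ : Nonempty (Fin n ↪ F) := Function.Embedding.nonempty_of_card_le (by simpa using hq)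
  refine Nat.sInf_le ⟨Matrix.of (fun j (t : Fin (n - k)) => emb j ^ (t : ℕ)), ?_⟩
  rintro z ⟨i, h1, h2⟩ hzero
  have hXn : (X i).card ≤ n := by simpa using (X i).card_le_univ
  have hk_le : k ≤ (X i).card - 2 * δ :=
    Finset.inf'_le (fun i : Fin m => (X i).card - 2 * δ) (Finset.mem_univ i)
  have hwt1 : wt z ≤ wtOn (X i) z + (n - (X i).card) := by
    have hsub : Finset.univ.filter (fun j => z j ≠ 0) ⊆
        (X i).filter (fun j => z j ≠ 0) ∪ (X i)ᶜ := by
      intro x hx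
      by_cases hxX : x ∈ X i
      · exact Finset.mem_union_left _ (Finset.mem_filter.mpr ⟨hxX, (Finset.mem_filter.mp hx).2⟩)
      · exact Finset.mem_union_right _ (Finset.mem_compl.mpr hxX)
    calc wt z ≤ ((X i).filter (fun j => z j ≠ 0) ∪ (X i)ᶜ).card := Finset.card_le_card hsub
      _ ≤ wtOn (X i) z + (X i)ᶜ.card := Finset.card_union_le _ _
      _ = wtOn (X i) z + (n - (X i).card) := by rw [Finset.card_compl]; simp
  have hwtn : wt z ≤ n := by
    simpa [wt] using Finset.card_le_card (Finset.subset_univ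
      (Finset.univ.filter (fun j => z j ≠ 0)))
  have hwt : wt z ≤ n - k := by omega
  have hz0 : z = 0 := by
    refine zero_of_low_wt emb emb.injective z hwt (fun t => ?_)
    have := congrFun hzero t
    simpa [Matrix.vecMul, dotProduct] using this
  rw [hz0] at h1
  simp [wtOn] at h1
end

section
/- Let C_1,...,C_K be (not necessarily disjoint) elements of Φ(B) for an (m,n,X,δ) BNSI problem, yielding a valid coding scheme of length N = Σ_k |C_k| − K + |R| where R = [n] \ (C_1∪...∪C_K). Then there exist pairwise disjoint elements C'_1,...,C'_{K'} of Φ(B) with K' ≤ K such that the analogous scheme based on them has codelength N' ≤ N. -/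
open Matrix

/-- Key counting lemma: the union's size plus the number of indices whose set
meets some earlier set is at most the total size. -/
lemma key_count {n K : ℕ} (C : Fin K → Finset (Fin n)) :
    (Finset.univ.biUnion C).card
      + ((Finset.univ : Finset (Fin K)) \
          (Finset.univ.filter fun j => ∀ i, i < j → Disjoint (C i) (C j))).card
      ≤ ∑ j, (C j).card := by
  classical
  set S : Finset (Fin K) := Finset.univ.filter fun j => ∀ i, i < j → Disjoint (C i) (C j) with hS
  set D : Fin K → Finset (Fin n) :=
    fun j => C j \ ((Finset.univ.filter (· < j)).biUnion C) with hD
  have hDsub : ∀ j, D j ⊆ C j := fun j => Finset.sdiff_subset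
  have hdisj : ∀ i j : Fin K, i < j → Disjoint (D i) (D j) := by
    intro i j hij
    rw [Finset.disjoint_left]
    intro x hxi hxj
    rcases Finset.mem_sdiff.mp hxj with ⟨_, hnot⟩
    exact hnot (Finset.mem_biUnion.mpr ⟨i, Finset.mem_filter.mpr ⟨Finset.mem_univ _, hij⟩,
      hDsub i hxi⟩)
  have hU : Finset.univ.biUnion D = Finset.univ.biUnion C := by
    apply Finset.Subset.antisymm
    · intro x hx
      rcases Finset.mem_biUnion.mp hx with ⟨j, _, hxj⟩
      exact Finset.mem_biUnion.mpr ⟨j, Finset.mem_univ _, hDsub j hxj⟩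
    · intro x hx
      rcases Finset.mem_biUnion.mp hx with ⟨j, _, hxj⟩
      set T : Finset (Fin K) := Finset.univ.filter fun j => x ∈ C j with hT
      have hTne : T.Nonempty := ⟨j, Finset.mem_filter.mpr ⟨Finset.mem_univ _, hxj⟩⟩
      refine Finset.mem_biUnion.mpr ⟨T.min' hTne, Finset.mem_univ _, ?_⟩
      refine Finset.mem_sdiff.mpr ⟨(Finset.mem_filter.mp (T.min'_mem hTne)).2, ?_⟩
      intro hmem
      rcases Finset.mem_biUnion.mp hmem with ⟨i, hi, hxi⟩
      have hij : i < T.min' hTne := (Finset.mem_filter.mp hi).2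
      exact absurd (Finset.min'_le T i (Finset.mem_filter.mpr ⟨Finset.mem_univ _, hxi⟩))
        (not_le.mpr hij)
  have hcard : (Finset.univ.biUnion C).card = ∑ j, (D j).card := by
    rw [← hU]
    exact Finset.card_biUnion (fun i _ j _ hij => by
      rcases lt_or_gt_of_ne hij with h | h
      · exact hdisj i j h
      · exact (hdisj j i h).symm)
  have hlt : ∀ j ∉ S, (D j).card + 1 ≤ (C j).card := by
    intro j hj
    rw [hS, Finset.mem_filter] at hj
    push_neg at hj
    rcases hj (Finset.mem_univ _) with ⟨i, hij, hndis⟩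
    rcases Finset.not_disjoint_iff.mp hndis with ⟨x, hxi, hxj⟩
    have hxD : x ∉ D j := by
      rw [hD]
      simp only [Finset.mem_sdiff, not_and, not_not]
      intro _
      exact Finset.mem_biUnion.mpr ⟨i, Finset.mem_filter.mpr ⟨Finset.mem_univ _, hij⟩, hxi⟩
    have : D j ⊂ C j := (hDsub j).ssubset_of_ne (fun h => hxD (h ▸ hxj))
    exact Nat.succ_le_of_lt (Finset.card_lt_card this)
  have hsum : ∑ j, ((D j).card + (if j ∈ S then 0 else 1)) ≤ ∑ j, (C j).card := by
    refine Finset.sum_le_sum fun j _ => ?_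
    by_cases h : j ∈ S
    · simpa [h] using Finset.card_le_card (hDsub j)
    · simpa [h] using hlt j h
    
  calc (Finset.univ.biUnion C).card + ((Finset.univ : Finset (Fin K)) \ S).card
      = ∑ j, (D j).card + ∑ j, (if j ∈ S then 0 else 1) := by
        rw [hcard]
        congr 1
        rw [Finset.sum_ite, Finset.sum_const, Finset.sum_const, smul_eq_mul, smul_eq_mul,
          mul_zero, mul_one, zero_add]
        rw [Finset.sdiff_eq_filter]
    _ = ∑ j, ((D j).card + (if j ∈ S then 0 else 1)) := (Finset.sum_add_distrib).symm
    _ ≤ ∑ j, (C j).card := hsum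

theorem stmt16 {m n : ℕ} (X : Fin m → Finset (Fin n)) (δ : ℕ)
    (K : ℕ) (C : Fin K → Finset (Fin n)) (hC : ∀ k, C k ∈ Phi X δ) :
    ∃ (K' : ℕ) (C' : Fin K' → Finset (Fin n)), K' ≤ K ∧
      (∀ k, C' k ∈ Phi X δ) ∧
      (∀ a b, a ≠ b → Disjoint (C' a) (C' b)) ∧
      (∑ k, ((C' k).card - 1)) + (Finset.univ \ Finset.univ.biUnion C').card ≤
        (∑ k, ((C k).card - 1)) + (Finset.univ \ Finset.univ.biUnion C).card := by
  classical
  set S : Finset (Fin K) := Finset.univ.filter fun j => ∀ i, i < j → Disjoint (C i) (C j)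
    with hS
  have hSprop : ∀ j ∈ S, ∀ i, i < j → Disjoint (C i) (C j) := by
    intro j hj
    exact (Finset.mem_filter.mp hj).2
  have hSdisj : ∀ i ∈ S, ∀ j ∈ S, i ≠ j → Disjoint (C i) (C j) := by
    intro i hi j hj hij
    rcases lt_or_gt_of_ne hij with h | h
    · exact hSprop j hj i h
    · exact (hSprop i hi j h).symm
  set e : Fin S.card ≃o {x // x ∈ S} := S.orderIsoOfFin rfl with he
  refine ⟨S.card, fun k => C (e k), ?_, fun k => hC _, ?_, ?_⟩
  · simpa using Finset.card_le_univ S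
  · intro a b hab
    exact hSdisj _ (e a).2 _ (e b).2 (fun h => hab (e.injective (Subtype.ext h)))
  · -- numeric part
    have hsum : ∀ f : Finset (Fin n) → ℕ,
        ∑ k : Fin S.card, f (C (e k)) = ∑ j ∈ S, f (C j) := by
      intro f
      rw [← Finset.sum_coe_sort S (fun j => f (C j))]
      exact Equiv.sum_comp e.toEquiv (fun j : {x // x ∈ S} => f (C j))
    have hbi : Finset.univ.biUnion (fun k => C (e k)) = S.biUnion C := by
      ext x
      simp only [Finset.mem_biUnion, Finset.mem_univ, true_and]
      constructor
      · rintro ⟨k, hx⟩; exact ⟨e k, (e k).2, hx⟩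
      · rintro ⟨j, hj, hx⟩
        exact ⟨e.symm ⟨j, hj⟩, by simpa using hx⟩
    have hpos : ∀ j : Fin K, 1 ≤ (C j).card :=
      fun j => Finset.card_pos.mpr (hC j).1
    have h1 : ∑ j ∈ S, ((C j).card - 1) + S.card = ∑ j ∈ S, (C j).card := by
      rw [Finset.card_eq_sum_ones, ← Finset.sum_add_distrib]
      exact Finset.sum_congr rfl fun j _ => Nat.sub_add_cancel (hpos j)
    have h2 : (S.biUnion C).card = ∑ j ∈ S, (C j).card := Finset.card_biUnion hSdisj
    have h3 : ∑ j, ((C j).card - 1) + K = ∑ j, (C j).card := by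
      have h := Finset.sum_congr rfl fun (j : Fin K) (_ : j ∈ Finset.univ) =>
        Nat.sub_add_cancel (hpos j)
      rw [Finset.sum_add_distrib] at h
      simpa using h
    have h4 := key_count C
    rw [← hS, Finset.card_sdiff_of_subset (Finset.subset_univ S), Finset.card_univ,
      Fintype.card_fin] at h4
    have h6 : (S.biUnion C).card ≤ n := by
      simpa using Finset.card_le_univ (S.biUnion C)
    have h7 : (Finset.univ.biUnion C).card ≤ n := by
      simpa using Finset.card_le_univ (Finset.univ.biUnion C)
    have h8 : S.card ≤ ∑ j ∈ S, (C j).card := by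
      rw [Finset.card_eq_sum_ones]
      exact Finset.sum_le_sum fun j _ => hpos j
    have h9 : (Finset.univ \ Finset.univ.biUnion fun k => C (e k)).card
        = n - ∑ j ∈ S, (C j).card := by
      rw [hbi, Finset.card_sdiff_of_subset (Finset.subset_univ _), h2]
      simp
    have h10 : (Finset.univ \ Finset.univ.biUnion C).card
        = n - (Finset.univ.biUnion C).card := by
      rw [Finset.card_sdiff_of_subset (Finset.subset_univ _)]
      simp
    have h11 : S.card ≤ K := by simpa using Finset.card_le_univ S
    rw [hsum (fun c => c.card - 1), h9, h10]
    omega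
end

section
/- Let 𝔠 = {C_1,...,C_K} be a collection of pairwise disjoint elements of Φ(B) for an (m,n,X,δ) BNSI problem. Then N_{q,opt} ≤ n − K. Moreover, if there exist indices i_1 ∈ C_1, ..., i_K ∈ C_K such that the subproblem induced by [n] \ {i_1,...,i_K} has empty Φ, then N_{q,opt} = n − K. -/
open Matrix

lemma upper {F : Type*} {m n : ℕ} [Field F] [DecidableEq F]
    (X : Fin m → Finset (Fin n)) (δ : ℕ)
    (K : ℕ) (C : Fin K → Finset (Fin n)) (hC : ∀ k, C k ∈ Phi X δ)
    (hdisj : ∀ a b, a ≠ b → Disjoint (C a) (C b)) :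
    ∃ L : Matrix (Fin n) (Fin (n - K)) F, ValidEncoder X δ L := by
  classical
  -- pick a pivot in each C k
  set p : Fin K → Fin n := fun k => (hC k).1.choose with hp
  have hpmem : ∀ k, p k ∈ C k := fun k => (hC k).1.choose_spec
  have hpinj : Function.Injective p := by
    intro a b hab
    by_contra hne
    exact Finset.disjoint_left.1 (hdisj a b hne) (hpmem a) (hab ▸ hpmem b)
  set S : Finset (Fin n) := Finset.univ \ Finset.univ.image p with hS
  have hcardS : S.card = n - K := by
    rw [hS, Finset.card_sdiff_of_subset (Finset.subset_univ _), Finset.card_univ,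
      Finset.card_image_of_injective _ hpinj, Finset.card_univ, Fintype.card_fin,
      Fintype.card_fin]
  -- the column index map
  have e : Fin (n - K) ≃ S := (Fin.castOrderIso hcardS).toEquiv.symm.trans S.equivFin.symm
  set g : Fin (n - K) → Fin n := fun c => (e c : Fin n) with hg
  have hgS : ∀ c, g c ∈ S := fun c => (e c).2
  have hgsurj : ∀ s ∈ S, ∃ c, g c = s := by
    intro s hs
    exact ⟨e.symm ⟨s, hs⟩, by simp [hg]⟩
  -- the full n × n matrix
  set M : Matrix (Fin n) (Fin n) F := fun j c =>
    if j = c then 1 else if ∃ k, j = p k ∧ c ∈ C k then 1 else 0 with hM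
  refine ⟨M.submatrix id g, ?_⟩
  intro z hz hcon
  obtain ⟨i, h1, h2⟩ := hz
  -- from vecMul z (submatrix) = 0 : for every s ∈ S, (vecMul z M) s = 0
  have hcol : ∀ s ∈ S, vecMul z M s = 0 := by
    intro s hs
    obtain ⟨c, rfl⟩ := hgsurj s hs
    have := congrFun hcon c
    simpa [vecMul, dotProduct, M, Matrix.submatrix] using this
  -- fact 1 : z vanishes outside ⋃ C k
  have hout : ∀ c : Fin n, (∀ k, c ∉ C k) → z c = 0 := by
    intro c hc
    have hcS : c ∈ S := by
      simp only [hS, Finset.mem_sdiff, Finset.mem_univ, true_and, Finset.mem_image]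
      rintro ⟨k, -, rfl⟩
      exact hc k (hpmem k)
    have h0 := hcol c hcS
    rw [show vecMul z M c = z c from ?_] at h0
    · exact h0
    · simp only [vecMul, dotProduct, hM]
      rw [Finset.sum_eq_single c]
      · simp
      · intro j _ hj
        have : ¬ ∃ k, j = p k ∧ c ∈ C k := by
          rintro ⟨k, rfl, hk⟩; exact hc k hk
        simp [hj, this]
      · simp
  -- fact 2 : on C k, z c = - z (p k) for c ≠ p k
  have hin : ∀ k, ∀ c ∈ C k, c ≠ p k → z c = - z (p k) := by
    intro k c hck hcp
    have hcS : c ∈ S := by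
      simp only [hS, Finset.mem_sdiff, Finset.mem_univ, true_and, Finset.mem_image]
      rintro ⟨k', -, rfl⟩
      have : k' = k := by
        by_contra hne
        exact Finset.disjoint_left.1 (hdisj k' k hne) (hpmem k') hck
      exact hcp (by rw [this])
    have h0 := hcol c hcS
    have hsum : vecMul z M c = z c + z (p k) := by
      simp only [vecMul, dotProduct, hM]
      have hpt : ∀ j : Fin n,
          z j * (if j = c then (1:F) else if ∃ k', j = p k' ∧ c ∈ C k' then 1 else 0)
          = (if j = c then z j else 0) + (if j = p k then z j else 0) := by
        intro j
        by_cases h1 : j = c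
        · subst h1
          simp [hcp]
        · by_cases h2 : j = p k
          · subst h2
            have : ∃ k', p k = p k' ∧ c ∈ C k' := ⟨k, rfl, hck⟩
            simp [h1, this]
          · have : ¬ ∃ k', j = p k' ∧ c ∈ C k' := by
              rintro ⟨k', rfl, hk'⟩
              have : k' = k := by
                by_contra hne
                exact Finset.disjoint_left.1 (hdisj k' k hne) hk' hck
              exact h2 (by rw [this])
            simp [h1, h2, this]
      rw [Finset.sum_congr rfl (fun j _ => hpt j), Finset.sum_add_distrib]
      simp
    rw [hsum] at h0
    exact eq_neg_of_add_eq_zero_left h0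
  -- pick a coordinate in X i where z is nonzero
  obtain ⟨j, hjX⟩ : ∃ j, j ∈ (X i).filter (fun j => z j ≠ 0) := by
    have : 0 < ((X i).filter (fun j => z j ≠ 0)).card := h1
    obtain ⟨j, hj⟩ := Finset.card_pos.1 this
    exact ⟨j, hj⟩
  have hjXi : j ∈ X i := (Finset.mem_filter.1 hjX).1
  have hjz : z j ≠ 0 := (Finset.mem_filter.1 hjX).2
  obtain ⟨k, hjk⟩ : ∃ k, j ∈ C k := by
    by_contra hk
    push_neg at hk
    exact hjz (hout j hk)
  have hpk : z (p k) ≠ 0 := by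
    by_cases hjp : j = p k
    · exact hjp ▸ hjz
    · intro h0
      exact hjz (by rw [hin k j hjk hjp, h0, neg_zero])
  have hall : ∀ c ∈ C k, z c ≠ 0 := by
    intro c hc
    by_cases hcp : c = p k
    · exact hcp ▸ hpk
    · rw [hin k c hc hcp]
      simpa using hpk
  have hsub : X i ∩ C k ⊆ (X i).filter (fun j => z j ≠ 0) := by
    intro c hc
    rw [Finset.mem_inter] at hc
    exact Finset.mem_filter.2 ⟨hc.1, hall c hc.2⟩
  have hbig : 2 * δ + 1 ≤ (X i ∩ C k).card := by
    rcases (hC k).2 i with h | h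
    · exact absurd (Finset.card_eq_zero.1 h ▸ Finset.mem_inter.2 ⟨hjXi, hjk⟩)
        (by simp)
    · exact h
  have := le_trans hbig (Finset.card_le_card hsub)
  unfold wtOn at h2
  omega

lemma lower {F : Type*} {m n : ℕ} [Field F] [DecidableEq F]
    (X : Fin m → Finset (Fin n)) (δ : ℕ) (K : ℕ) (idx : Fin K → Fin n)
    (hidxinj : Function.Injective idx)
    (hphi : ¬∃ C' ∈ Phi X δ, C' ⊆ Finset.univ \ Finset.univ.image idx)
    {N : ℕ} (L : Matrix (Fin n) (Fin N) F) (hL : ValidEncoder X δ L) :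
    n - K ≤ N := by
  classical
  set T : Finset (Fin n) := Finset.univ \ Finset.univ.image idx with hT
  have hcardT : T.card = n - K := by
    rw [hT, Finset.card_sdiff_of_subset (Finset.subset_univ _), Finset.card_univ,
      Finset.card_image_of_injective _ hidxinj, Finset.card_univ, Fintype.card_fin,
      Fintype.card_fin]
  -- extension linear map
  set ext : (T → F) → (Fin n → F) := fun z j => if h : j ∈ T then z ⟨j, h⟩ else 0 with hext
  have hext_add : ∀ z w, ext (z + w) = ext z + ext w := by
    intro z w; funext j; by_cases h : j ∈ T <;> simp [hext, h]
  have hext_smul : ∀ (a : F) z, ext (a • z) = a • ext z := by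
    intro a z; funext j; by_cases h : j ∈ T <;> simp [hext, h]
  set f : (T → F) →ₗ[F] (Fin N → F) :=
    { toFun := fun z => vecMul (ext z) L
      map_add' := fun z w => by show vecMul (ext (z+w)) L = vecMul (ext z) L + vecMul (ext w) L; rw [hext_add, Matrix.add_vecMul]
      map_smul' := fun a z => by show vecMul (ext (a • z)) L = a • vecMul (ext z) L; rw [hext_smul, Matrix.smul_vecMul] } with hf
  have hinj : Function.Injective f := by
    rw [injective_iff_map_eq_zero]
    intro z hz0
    by_contra hzne
    -- ext z is a nonzero vector supported in T
    have hextne : ∃ j, ext z j ≠ 0 := by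
      have : ∃ t : T, z t ≠ 0 := by
        by_contra h; push_neg at h
        exact hzne (funext fun t => h t)
      obtain ⟨t, ht⟩ := this
      exact ⟨t, by simpa [hext, t.2] using ht⟩
    set supp : Finset (Fin n) := Finset.univ.filter (fun j => ext z j ≠ 0) with hsupp
    have hne : supp.Nonempty := by
      obtain ⟨j, hj⟩ := hextne
      exact ⟨j, by simp [hsupp, hj]⟩
    have hwt : ∀ i, ¬(1 ≤ wtOn (X i) (ext z) ∧ wtOn (X i) (ext z) ≤ 2 * δ) := by
      intro i hi
      exact hL (ext z) ⟨i, hi⟩ hz0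
    refine hphi ⟨supp, ⟨hne, ?_⟩, ?_⟩
    · intro i
      have hcard : (X i ∩ supp).card = wtOn (X i) (ext z) := by
        congr 1
        ext j
        simp [hsupp, wtOn, Finset.mem_filter, and_comm]
      have := hwt i
      rw [hcard]
      omega
    · intro j hj
      have : ext z j ≠ 0 := (Finset.mem_filter.1 hj).2
      by_contra hjT
      apply this
      rw [hext]
      exact dif_neg hjT
  have := LinearMap.finrank_le_finrank_of_injective hinj
  rw [Module.finrank_fintype_fun_eq_card, Module.finrank_fintype_fun_eq_card,
    Fintype.card_fin, Fintype.card_coe, hcardT] at this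
  exact this

theorem stmt17 {F : Type*} {m n : ℕ} [Field F] [DecidableEq F]
    (X : Fin m → Finset (Fin n)) (δ : ℕ)
    (K : ℕ) (C : Fin K → Finset (Fin n)) (hC : ∀ k, C k ∈ Phi X δ)
    (hdisj : ∀ a b, a ≠ b → Disjoint (C a) (C b)) :
    Nopt F X δ ≤ n - K ∧
      ∀ idx : Fin K → Fin n, (∀ k, idx k ∈ C k) →
        (¬∃ C' ∈ Phi X δ, C' ⊆ Finset.univ \ Finset.univ.image idx) →
        Nopt F X δ = n - K := by
  classical
  have hup : Nopt F X δ ≤ n - K := Nat.sInf_le (upper X δ K C hC hdisj)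
  refine ⟨hup, ?_⟩
  intro idx hidx hphi
  have hidxinj : Function.Injective idx := by
    intro a b hab
    by_contra hne
    exact Finset.disjoint_left.1 (hdisj a b hne) (hidx a) (hab ▸ hidx b)
  refine le_antisymm hup (le_csInf ⟨n - K, upper X δ K C hC hdisj⟩ ?_)
  rintro N ⟨L, hL⟩
  exact lower X δ K idx hidxinj hphi L hL
end

section
/- Let (m,n,X,δ) be a BNSI problem with index set I = ∪_i {z ∈ F_q^n : 1 ≤ wt(z_{X_i}) ≤ 2δ}, and let (m̂,n,X̂,f) be the index coding problem constructed as follows: for every i ∈ [m], every p ∈ X_i, and every Q ⊆ X_i \ {p} with |Q| = min(|X_i|−1, 2δ−1), create a receiver demanding message p with side information index set X_i \ (Q ∪ {p}). Let I_IC = ∪_j {z ∈ F_q^n : z restricted to the j-th side information set is 0 and z_{f(j)} ≠ 0}. Then I = I_IC. -/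
open Matrix

theorem stmt18 {F : Type*} {m n : ℕ} [Field F] [DecidableEq F]
    (X : Fin m → Finset (Fin n)) (δ : ℕ) (hδ : 1 ≤ δ) :
    {z : Fin n → F | ∃ i, 1 ≤ wtOn (X i) z ∧ wtOn (X i) z ≤ 2 * δ} =
      {z : Fin n → F | ∃ (i : Fin m) (p : Fin n) (Q : Finset (Fin n)),
        p ∈ X i ∧ Q ⊆ X i \ {p} ∧ Q.card = min ((X i).card - 1) (2 * δ - 1) ∧
        (∀ j ∈ X i \ insert p Q, z j = 0) ∧ z p ≠ 0} := by
  ext z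
  simp only [Set.mem_setOf_eq]
  constructor
  · rintro ⟨i, h1, h2⟩
    set S := (X i).filter fun j => z j ≠ 0 with hS
    have hScard : 1 ≤ S.card := h1
    obtain ⟨p, hp⟩ := Finset.card_pos.mp hScard
    have hpX : p ∈ X i := (Finset.mem_filter.mp hp).1
    have hzp : z p ≠ 0 := (Finset.mem_filter.mp hp).2
    have hsub : S \ {p} ⊆ X i \ {p} := Finset.sdiff_subset_sdiff (Finset.filter_subset _ _) le_rfl
    have hc1 : (S \ {p}).card = S.card - 1 := by
      rw [Finset.card_sdiff_of_subset (Finset.singleton_subset_iff.mpr hp), Finset.card_singleton]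
    have hSw : S.card = wtOn (X i) z := rfl
    have hle1 : (S \ {p}).card ≤ 2 * δ - 1 := by
      rw [hc1]; omega
    have hle2 : (S \ {p}).card ≤ (X i).card - 1 := by
      calc (S \ {p}).card ≤ (X i \ {p}).card := Finset.card_le_card hsub
        _ = (X i).card - 1 := by
          rw [Finset.card_sdiff_of_subset (Finset.singleton_subset_iff.mpr hpX), Finset.card_singleton]
    have hmin1 : min ((X i).card - 1) (2 * δ - 1) ≤ (X i \ {p}).card := by
      rw [Finset.card_sdiff_of_subset (Finset.singleton_subset_iff.mpr hpX), Finset.card_singleton]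
      exact min_le_left _ _
    obtain ⟨Q, hQ1, hQ2, hQ3⟩ := Finset.exists_subsuperset_card_eq hsub
      (le_min hle2 hle1) hmin1
    refine ⟨i, p, Q, hpX, hQ2, hQ3, ?_, hzp⟩
    intro j hj
    rw [Finset.mem_sdiff, Finset.mem_insert] at hj
    obtain ⟨hjX, hjn⟩ := hj
    push_neg at hjn
    by_contra hzj
    have hjS : j ∈ S := Finset.mem_filter.mpr ⟨hjX, hzj⟩
    have : j ∈ S \ {p} := Finset.mem_sdiff.mpr ⟨hjS, by simp [hjn.1]⟩
    exact hjn.2 (hQ1 this)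
  · rintro ⟨i, p, Q, hpX, hQsub, hQcard, hz0, hzp⟩
    have hpQ : p ∉ Q := fun h => by simpa using (Finset.mem_sdiff.mp (hQsub h)).2
    refine ⟨i, ?_, ?_⟩
    · exact Finset.card_pos.mpr ⟨p, Finset.mem_filter.mpr ⟨hpX, hzp⟩⟩
    · have hsub : (X i).filter (fun j => z j ≠ 0) ⊆ insert p Q := by
        intro j hj
        rw [Finset.mem_filter] at hj
        by_contra hji
        exact hj.2 (hz0 j (Finset.mem_sdiff.mpr ⟨hj.1, hji⟩))
      calc wtOn (X i) z ≤ (insert p Q).card := Finset.card_le_card hsub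
        _ = Q.card + 1 := Finset.card_insert_of_notMem hpQ
        _ ≤ 2 * δ := by rw [hQcard]; omega
end

section
/- A matrix L ∈ F_q^{n×N} is a valid encoder matrix for the (m,n,X,δ) BNSI problem if and only if it is a valid scalar linear index code encoder for the index coding problem (m̂,n,X̂,f) constructed from it (receivers: for each i ∈ [m], p ∈ X_i, and Q ⊆ X_i\{p} with |Q| = min(|X_i|−1, 2δ−1), a receiver demanding p with side information indexed by X_i \ (Q ∪ {p})). -/
open Matrix

theorem stmt19 {F : Type*} {m n N : ℕ} [Field F] [DecidableEq F]
    (X : Fin m → Finset (Fin n)) (δ : ℕ) (hδ : 1 ≤ δ)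
    (L : Matrix (Fin n) (Fin N) F) :
    ValidEncoder X δ L ↔
      ∀ z : Fin n → F,
        (∃ (i : Fin m) (p : Fin n) (Q : Finset (Fin n)),
          p ∈ X i ∧ Q ⊆ X i \ {p} ∧ Q.card = min ((X i).card - 1) (2 * δ - 1) ∧
          (∀ j ∈ X i \ insert p Q, z j = 0) ∧ z p ≠ 0) →
        Matrix.vecMul z L ≠ 0 := by
  constructor
  · intro hV z ⟨i, p, Q, hp, hQsub, hQcard, hzero, hzp⟩
    apply hV
    refine ⟨i, ?_, ?_⟩
    · rw [Nat.one_le_iff_ne_zero, wtOn, Ne, Finset.card_eq_zero, Finset.eq_empty_iff_forall_notMem]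
      intro h
      exact h p (Finset.mem_filter.2 ⟨hp, hzp⟩)
    · -- support within X i is contained in insert p Q
      have hsub : (X i).filter (fun j => z j ≠ 0) ⊆ insert p Q := by
        intro j hj
        rw [Finset.mem_filter] at hj
        by_contra hjn
        exact hj.2 (hzero j (Finset.mem_sdiff.2 ⟨hj.1, hjn⟩))
      calc wtOn (X i) z ≤ (insert p Q).card := Finset.card_le_card hsub
        _ ≤ Q.card + 1 := Finset.card_insert_le _ _
        _ ≤ 2 * δ := by omega
  · intro hV z ⟨i, h1, h2⟩
    apply hV
    set S := (X i).filter (fun j => z j ≠ 0) with hS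
    have hSX : S ⊆ X i := Finset.filter_subset _ _
    obtain ⟨p, hpS⟩ := Finset.card_pos.1 h1
    have hpX : p ∈ X i := hSX hpS
    have hzp : z p ≠ 0 := (Finset.mem_filter.1 hpS).2
    have hcard : (S \ {p}).card = S.card - 1 := by
      rw [Finset.card_sdiff_of_subset (Finset.singleton_subset_iff.2 hpS)]; simp only [Finset.card_singleton]; rfl
    have hXp : (X i \ {p}).card = (X i).card - 1 := by
      rw [Finset.card_sdiff_of_subset (by simpa using hpX)]; simp
    have hle1 : (S \ {p}).card ≤ min ((X i).card - 1) (2 * δ - 1) := by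
      have hSle : S.card ≤ (X i).card := Finset.card_le_card hSX
      have hw : wtOn (X i) z = S.card := rfl
      omega
    have hle2 : min ((X i).card - 1) (2 * δ - 1) ≤ (X i \ {p}).card := by omega
    obtain ⟨Q, hQ1, hQ2, hQ3⟩ := Finset.exists_subsuperset_card_eq
      (Finset.sdiff_subset_sdiff hSX (le_refl _)) hle1 hle2
    refine ⟨i, p, Q, hpX, hQ2, hQ3, ?_, hzp⟩
    intro j hj
    rw [Finset.mem_sdiff, Finset.mem_insert] at hj
    by_contra hzj
    have hjS : j ∈ S := Finset.mem_filter.2 ⟨hj.1, hzj⟩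
    have hjp : j ≠ p := fun h => hj.2 (Or.inl h)
    exact hj.2 (Or.inr (hQ1 (Finset.mem_sdiff.2 ⟨hjS, by simpa using hjp⟩)))
end
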